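/- Let λ > 0 and V*_λ := (Σ + λI − γΣ₁)^{-1} b. Let V : ℝ → H be differentiable with V′(t) = (γΣ₁ − Σ − λI)V(t) + b for all t ≥ 0, and define W(t) := ‖V(t) − V*_λ‖². Then W is differentiable and for all t ≥ 0, W′(t) ≤ −2(1 − γ)·‖Σ^{1/2}(V(t) − V*_λ)‖² − 2λ·W(t). -/

import Mathlib

open scoped InnerProductSpace

/-- Descent Lemma, continuous time: let `λ > 0`,
`V*_λ = (Σ + λI - γΣ₁)⁻¹ b` (characterized by `(Σ + λI - γΣ₁) V*_λ = b`), and let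
`V : ℝ → H` be differentiable with `V'(t) = (γΣ₁ - Σ - λI)V(t) + b` for all `t ≥ 0`.
Then `W(t) = ‖V(t) - V*_λ‖²` is differentiable and for all `t ≥ 0`,
`W'(t) ≤ -2(1-γ)‖Σ^{1/2}(V(t) - V*_λ)‖² - 2λ W(t)`. -/
theorem td_ode_descent_lemma
    {H : Type*} [NormedAddCommGroup H] [InnerProductSpace ℝ H] [CompleteSpace H]
    (Sig S T1 Sig1 : H →L[ℝ] H)
    (hSigSA : IsSelfAdjoint Sig) (hSigPos : ∀ f : H, 0 ≤ ⟪f, Sig f⟫_ℝ)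
    (hSsa : IsSelfAdjoint S) (hSpos : ∀ f : H, 0 ≤ ⟪f, S f⟫_ℝ) (hSsq : S * S = Sig)
    (hT1 : ‖T1‖ ≤ 1) (hSig1 : Sig1 = S * T1 * S)
    (γ : ℝ) (hγ0 : 0 ≤ γ) (hγ1 : γ < 1) (b : H)
    (lam : ℝ) (hlam : 0 < lam)
    (Vlam : H) (hVlam : (Sig + lam • 1 - γ • Sig1) Vlam = b)
    (V : ℝ → H) (hVdiff : Differentiable ℝ V)
    (hODE : ∀ t : ℝ, 0 ≤ t → HasDerivAt V ((γ • Sig1 - Sig - lam • 1) (V t) + b) t) :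
    Differentiable ℝ (fun t : ℝ => ‖V t - Vlam‖ ^ 2) ∧
    ∀ t : ℝ, 0 ≤ t →
      deriv (fun s : ℝ => ‖V s - Vlam‖ ^ 2) t ≤
        -2 * (1 - γ) * ‖S (V t - Vlam)‖ ^ 2 - 2 * lam * ‖V t - Vlam‖ ^ 2 := by
  have hSsym := ContinuousLinearMap.isSelfAdjoint_iff_isSymmetric.mp hSsa
  set A : H →L[ℝ] H := γ • Sig1 - Sig - lam • 1 with hA
  have hE : Differentiable ℝ (fun t => V t - Vlam) := hVdiff.sub_const Vlam
  have hfun : (fun t : ℝ => ‖V t - Vlam‖ ^ 2)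
      = fun t : ℝ => ⟪V t - Vlam, V t - Vlam⟫_ℝ := by
    funext t; rw [real_inner_self_eq_norm_sq]
  have hdiff : Differentiable ℝ (fun t : ℝ => ‖V t - Vlam‖ ^ 2) := by
    rw [hfun]; exact hE.inner ℝ hE
  refine ⟨hdiff, fun t ht => ?_⟩
  -- derivative of E
  have hAVlam : A Vlam = -b := by
    have : A Vlam = -((Sig + lam • 1 - γ • Sig1) Vlam) := by
      simp [hA]; abel
    rw [this, hVlam]
  have hEderiv : HasDerivAt (fun s => V s - Vlam) (A (V t - Vlam)) t := by
    have h := (hODE t ht).sub_const Vlam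
    convert h using 1
    rw [map_sub, hAVlam]; abel
  have hW : HasDerivAt (fun s : ℝ => ‖V s - Vlam‖ ^ 2)
      (2 * ⟪V t - Vlam, A (V t - Vlam)⟫_ℝ) t := by
    rw [hfun]
    have := hEderiv.inner ℝ hEderiv
    refine this.congr_deriv ?_
    rw [real_inner_comm]; ring
  rw [hW.deriv]
  set E := V t - Vlam with hEdef
  have hinner : ⟪E, A E⟫_ℝ = γ * ⟪S E, T1 (S E)⟫_ℝ - ‖S E‖ ^ 2 - lam * ‖E‖ ^ 2 := by
    have h1 : ⟪E, Sig E⟫_ℝ = ‖S E‖ ^ 2 := by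
      rw [← hSsq]
      have : (S * S) E = S (S E) := rfl
      rw [this, ← real_inner_self_eq_norm_sq]
      exact (hSsym E (S E)).symm
    have h2 : ⟪E, Sig1 E⟫_ℝ = ⟪S E, T1 (S E)⟫_ℝ := by
      rw [hSig1]
      have : (S * T1 * S) E = S (T1 (S E)) := rfl
      rw [this]
      exact (hSsym E (T1 (S E))).symm
    simp only [hA, ContinuousLinearMap.sub_apply, ContinuousLinearMap.smul_apply,
      ContinuousLinearMap.one_apply, inner_sub_right, inner_smul_right,
      real_inner_self_eq_norm_sq, h1, h2]
  have hbound : ⟪S E, T1 (S E)⟫_ℝ ≤ ‖S E‖ ^ 2 := by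
    calc ⟪S E, T1 (S E)⟫_ℝ ≤ ‖S E‖ * ‖T1 (S E)‖ := real_inner_le_norm _ _
      _ ≤ ‖S E‖ * (‖T1‖ * ‖S E‖) := by
          exact mul_le_mul_of_nonneg_left (T1.le_opNorm _) (norm_nonneg _)
      _ ≤ ‖S E‖ * (1 * ‖S E‖) := by
          have := mul_le_mul_of_nonneg_right hT1 (norm_nonneg (S E))
          exact mul_le_mul_of_nonneg_left this (norm_nonneg _)
      _ = ‖S E‖ ^ 2 := by ring
  rw [hinner]
  nlinarith [mul_le_mul_of_nonneg_left hbound hγ0]
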